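/- The quiver Γ̄ whose vertices are the admissible arcs of P_{g,h} (preprojective, preinjective, and peripheral arcs) and whose arrows are all elementary moves and all long moves is connected: for any two admissible arcs α and β there is a finite sequence α = α_0, α_1, …, α_t = β of admissible arcs such that for each s there is an elementary or long move from α_s to α_{s+1} or from α_{s+1} to α_s. -/

import Mathlib

/-- Shift the first entry of every point of `A` by `d` (well defined on arcs, since it
commutes with the deck transformations). -/
def shiftFst (d : ℤ) (A : Set (ℤ × ℤ)) : Set (ℤ × ℤ) := (fun p => (p.1 + d, p.2)) '' A

/-- Shift the second entry of every point of `A` by `d` (well defined on arcs). -/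
def shiftSnd (d : ℤ) (A : Set (ℤ × ℤ)) : Set (ℤ × ℤ) := (fun p => (p.1, p.2 + d)) '' A

/-- The bridging arc `π[x_∂, y_∂']` of the annulus `P_{g,h}`, from the outer boundary `∂`
to the inner boundary `∂'`: the orbit of `(x, y) ∈ ℤ × ℤ` under `σ·(x,y) = (x+g, y+h)`. -/
def orbPP (g h x y : ℤ) : Set (ℤ × ℤ) := {q : ℤ × ℤ | ∃ k : ℤ, q = (x + k * g, y + k * h)}

/-- Elementary moves between bridging arcs from `∂` to `∂'`:
`π[x_∂, y_∂'] → π[(x-1)_∂, y_∂']` and `π[x_∂, y_∂'] → π[x_∂, (y+1)_∂']`. -/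
def elemPP (A B : Set (ℤ × ℤ)) : Prop := B = shiftFst (-1) A ∨ B = shiftSnd 1 A

/-- A bridging arc from `∂` to `∂'` is preprojective if it can be reached from
`β_g = π[0_∂, 0_∂']` by a finite (possibly empty) sequence of elementary moves. -/
def IsPreproj (g h : ℤ) (A : Set (ℤ × ℤ)) : Prop :=
  Relation.ReflTransGen elemPP (orbPP g h 0 0) A

/-- The bridging arc `π[j_∂', x_∂]` of the annulus `P_{g,h}`, from the inner boundary `∂'`
to the outer boundary `∂`: the orbit of `(j, x) ∈ ℤ × ℤ` under `σ·(j,x) = (j+h, x+g)`. -/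
def orbPI (g h j x : ℤ) : Set (ℤ × ℤ) := {q : ℤ × ℤ | ∃ k : ℤ, q = (j + k * h, x + k * g)}

/-- Elementary moves between bridging arcs from `∂'` to `∂`:
`π[j_∂', x_∂] → π[(j+1)_∂', x_∂]` and `π[j_∂', x_∂] → π[j_∂', (x-1)_∂]`. -/
def elemPI (A B : Set (ℤ × ℤ)) : Prop := B = shiftFst 1 A ∨ B = shiftSnd (-1) A

/-- The injective arcs: `γ_i = π[(-2)_∂', (i-g+2)_∂]` for `0 ≤ i ≤ g` and
`γ_i = π[(i-g-2)_∂', 2_∂]` for `g < i ≤ n`. -/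
def gammaArc (g h i : ℤ) : Set (ℤ × ℤ) :=
  if i ≤ g then orbPI g h (-2) (i - g + 2) else orbPI g h (i - g - 2) 2

/-- A bridging arc from `∂'` to `∂` is preinjective if `γ_0` can be reached from it by a
finite (possibly empty) sequence of elementary moves. -/
def IsPreinj (g h : ℤ) (A : Set (ℤ × ℤ)) : Prop :=
  Relation.ReflTransGen elemPI A (gammaArc g h 0)

/-- The peripheral arc `π[i, j]` with period `c` (`c = g` at the outer boundary `∂`,
`c = h` at the inner boundary `∂'`): the orbit of `(i, j) ∈ ℤ × ℤ` (with `j ≥ i + 2`)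
under the shift `σ·(i,j) = (i+c, j+c)`. -/
def orbPer (c i j : ℤ) : Set (ℤ × ℤ) := {q : ℤ × ℤ | ∃ k : ℤ, q = (i + k * c, j + k * c)}

/-- Peripheral arcs at the outer boundary `∂` of `P_{g,h}`. -/
def IsPerOut (g : ℤ) (A : Set (ℤ × ℤ)) : Prop := ∃ i j : ℤ, i + 2 ≤ j ∧ A = orbPer g i j

/-- Peripheral arcs at the inner boundary `∂'` of `P_{g,h}`. -/
def IsPerIn (h : ℤ) (A : Set (ℤ × ℤ)) : Prop := ∃ i j : ℤ, i + 2 ≤ j ∧ A = orbPer h i j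

/-- Elementary moves between peripheral arcs at `∂`: `π[i_∂, j_∂] → π[(i-1)_∂, j_∂]`, and
`π[i_∂, j_∂] → π[i_∂, (j-1)_∂]` provided the result is still a peripheral arc
(i.e. `j ≥ i + 3`). -/
def elemPerOut (g : ℤ) (A B : Set (ℤ × ℤ)) : Prop :=
  B = shiftFst (-1) A ∨ (IsPerOut g (shiftSnd (-1) A) ∧ B = shiftSnd (-1) A)

/-- Elementary moves between peripheral arcs at `∂'`: `π[i_∂', j_∂'] → π[i_∂', (j+1)_∂']`,
and `π[i_∂', j_∂'] → π[(i+1)_∂', j_∂']` provided `j ≥ i + 3`. -/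
def elemPerIn (h : ℤ) (A B : Set (ℤ × ℤ)) : Prop :=
  B = shiftSnd 1 A ∨ (IsPerIn h (shiftFst 1 A) ∧ B = shiftFst 1 A)

/-- Admissible arcs of the annulus, tagged by their kind: bridging `∂ → ∂'` (`pp`),
bridging `∂' → ∂` (`pi`), peripheral at `∂` (`po`), peripheral at `∂'` (`pe`). -/
inductive AArc where
  | pp (A : Set (ℤ × ℤ))
  | pi (A : Set (ℤ × ℤ))
  | po (A : Set (ℤ × ℤ))
  | pe (A : Set (ℤ × ℤ))

/-- An arc is admissible if it is preprojective, preinjective or peripheral. -/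
def Admissible (g h : ℤ) : AArc → Prop
  | .pp A => IsPreproj g h A
  | .pi A => IsPreinj g h A
  | .po A => IsPerOut g A
  | .pe A => IsPerIn h A

/-- The arrows of the quiver `Γ̄`: all elementary moves together with all long moves.
Long moves go from a preprojective arc `π[x_∂, y_∂']` to `π[x_∂, (x+k)_∂]` (`k ≥ 2`) and
to `π[(y-k)_∂', y_∂']` (`k ≥ 2`); from a peripheral arc `π[a_∂, y_∂]` to every
preinjective arc `π[x_∂', y_∂]`; and from a peripheral arc `π[x_∂', b_∂']` to every
preinjective arc `π[x_∂', z_∂]`. -/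
def Move (g h : ℤ) : AArc → AArc → Prop
  | .pp A, .pp B => elemPP A B
  | .pi A, .pi B => elemPI A B
  | .po A, .po B => elemPerOut g A B
  | .pe A, .pe B => elemPerIn h A B
  | .pp A, .po B =>
      IsPreproj g h A ∧ ∃ x y k : ℤ, 2 ≤ k ∧ A = orbPP g h x y ∧ B = orbPer g x (x + k)
  | .pp A, .pe B =>
      IsPreproj g h A ∧ ∃ x y k : ℤ, 2 ≤ k ∧ A = orbPP g h x y ∧ B = orbPer h (y - k) y
  | .po A, .pi B =>
      ∃ a y x : ℤ, a + 2 ≤ y ∧ A = orbPer g a y ∧ B = orbPI g h x y ∧ IsPreinj g h B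
  | .pe A, .pi B =>
      ∃ x b z : ℤ, x + 2 ≤ b ∧ A = orbPer h x b ∧ B = orbPI g h x z ∧ IsPreinj g h B
  | _, _ => False

section AuxConn

open Relation

private lemma shiftFst_orb (d x y a b : ℤ) :
    shiftFst d {q : ℤ × ℤ | ∃ k : ℤ, q = (x + k * a, y + k * b)}
      = {q : ℤ × ℤ | ∃ k : ℤ, q = (x + d + k * a, y + k * b)} := by
  ext ⟨u, v⟩
  simp only [shiftFst, Set.mem_image, Set.mem_setOf_eq, Prod.mk.injEq, Prod.exists]
  constructor
  · rintro ⟨p, q, ⟨k, rfl, rfl⟩, h1, h2⟩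
    exact ⟨k, by rw [← h1]; ring, h2.symm⟩
  · rintro ⟨k, h1, h2⟩
    exact ⟨x + k * a, y + k * b, ⟨k, rfl, rfl⟩, by rw [h1]; ring, h2.symm⟩

private lemma shiftSnd_orb (d x y a b : ℤ) :
    shiftSnd d {q : ℤ × ℤ | ∃ k : ℤ, q = (x + k * a, y + k * b)}
      = {q : ℤ × ℤ | ∃ k : ℤ, q = (x + k * a, y + d + k * b)} := by
  ext ⟨u, v⟩
  simp only [shiftSnd, Set.mem_image, Set.mem_setOf_eq, Prod.mk.injEq, Prod.exists]
  constructor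
  · rintro ⟨p, q, ⟨k, rfl, rfl⟩, h1, h2⟩
    exact ⟨k, h1.symm, by rw [← h2]; ring⟩
  · rintro ⟨k, h1, h2⟩
    exact ⟨x + k * a, y + k * b, ⟨k, rfl, rfl⟩, h1.symm, by rw [h2]; ring⟩

private lemma orb_shift (x y a b m : ℤ) :
    {q : ℤ × ℤ | ∃ k : ℤ, q = (x + k * a, y + k * b)}
      = {q : ℤ × ℤ | ∃ k : ℤ, q = (x + m * a + k * a, y + m * b + k * b)} := by
  ext ⟨u, v⟩
  simp only [Set.mem_setOf_eq, Prod.mk.injEq]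
  constructor
  · rintro ⟨k, h1, h2⟩
    exact ⟨k - m, by rw [h1]; push_cast; ring, by rw [h2]; push_cast; ring⟩
  · rintro ⟨k, h1, h2⟩
    exact ⟨k + m, by rw [h1]; push_cast; ring, by rw [h2]; push_cast; ring⟩

private lemma shiftFst_orbPP (g h d x y : ℤ) :
    shiftFst d (orbPP g h x y) = orbPP g h (x + d) y := shiftFst_orb d x y g h

private lemma shiftSnd_orbPP (g h d x y : ℤ) :
    shiftSnd d (orbPP g h x y) = orbPP g h x (y + d) := shiftSnd_orb d x y g h

private lemma shiftFst_orbPI (g h d x y : ℤ) :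
    shiftFst d (orbPI g h x y) = orbPI g h (x + d) y := shiftFst_orb d x y h g

private lemma shiftSnd_orbPI (g h d x y : ℤ) :
    shiftSnd d (orbPI g h x y) = orbPI g h x (y + d) := shiftSnd_orb d x y h g

private lemma orbPer_shift (c i j m : ℤ) :
    orbPer c i j = orbPer c (i + m * c) (j + m * c) := orb_shift i j c c m

private lemma preproj_nat (g h : ℤ) (a b : ℕ) :
    IsPreproj g h (orbPP g h (-(a : ℤ)) (b : ℤ)) := by
  induction b with
  | zero =>
    induction a with
    | zero => simp only [Nat.cast_zero, neg_zero]; exact Relation.ReflTransGen.refl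
    | succ a ih =>
      refine ih.tail (Or.inl ?_)
      rw [shiftFst_orbPP]
      congr 1
      push_cast; ring
  | succ b ih =>
    refine ih.tail (Or.inr ?_)
    rw [shiftSnd_orbPP]
    congr 1

private lemma preproj_xy (g h x y : ℤ) (hx : x ≤ 0) (hy : 0 ≤ y) :
    IsPreproj g h (orbPP g h x y) := by
  have h1 : (-(((-x).toNat : ℤ))) = x := by omega
  have h2 : ((y.toNat : ℤ)) = y := by omega
  have := preproj_nat g h (-x).toNat y.toNat
  rwa [h1, h2] at this

/-- The symmetric connectedness relation. -/
private def CR (g h : ℤ) : AArc → AArc → Prop :=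
  fun u v => Admissible g h u ∧ Admissible g h v ∧ (Move g h u v ∨ Move g h v u)

private lemma CR_symm (g h : ℤ) : Symmetric (CR g h) := by
  rintro u v ⟨h1, h2, h3⟩
  exact ⟨h2, h1, h3.symm⟩

private lemma pp_connect (g h : ℤ) {A : Set (ℤ × ℤ)} (hA : IsPreproj g h A) :
    Relation.ReflTransGen (CR g h) (.pp (orbPP g h 0 0)) (.pp A) := by
  induction hA with
  | refl => exact .refl
  | @tail B C hB hBC ih =>
    exact ih.tail ⟨hB, hB.tail hBC, Or.inl hBC⟩

private lemma pi_connect (g h : ℤ) {A : Set (ℤ × ℤ)} (hA : IsPreinj g h A) :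
    Relation.ReflTransGen (CR g h) (.pi A) (.pi (gammaArc g h 0)) := by
  induction hA using Relation.ReflTransGen.head_induction_on with
  | refl => exact .refl
  | @head B C hBC hC ih =>
    exact ih.head (show CR g h (.pi B) (.pi C) from ⟨hC.head hBC, hC, Or.inl hBC⟩)

private lemma po_connect (g h : ℤ) (hh : 1 ≤ h) (hg : 1 ≤ g) (i j : ℤ) (hij : i + 2 ≤ j) :
    Relation.ReflTransGen (CR g h) (.pp (orbPP g h 0 0)) (.po (orbPer g i j)) := by
  set k0 : ℤ := max i 0 with hk0
  have hk0n : 0 ≤ k0 := le_max_right i 0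
  have hxle : i - k0 * g ≤ 0 := by
    have : k0 ≤ k0 * g := le_mul_of_one_le_right hk0n hg
    have : i ≤ k0 * g := le_trans (le_max_left i 0) this
    omega
  have hyge : 0 ≤ k0 * h := mul_nonneg hk0n (by omega)
  have hpre : IsPreproj g h (orbPP g h (i - k0 * g) (k0 * h)) :=
    preproj_xy g h _ _ hxle hyge
  have hper : IsPerOut g (orbPer g i j) := ⟨i, j, hij, rfl⟩
  have heq : orbPer g i j = orbPer g (i - k0 * g) (i - k0 * g + (j - i)) := by
    rw [orbPer_shift g i j (-k0)]
    congr 1 <;> ring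
  have hmove : Move g h (.pp (orbPP g h (i - k0 * g) (k0 * h))) (.po (orbPer g i j)) :=
    ⟨hpre, i - k0 * g, k0 * h, j - i, by omega, rfl, heq⟩
  exact (pp_connect g h hpre).tail ⟨hpre, hper, Or.inl hmove⟩

private lemma pe_connect (g h : ℤ) (hh : 1 ≤ h) (i j : ℤ) (hij : i + 2 ≤ j) :
    Relation.ReflTransGen (CR g h) (.pp (orbPP g h 0 0)) (.pe (orbPer h i j)) := by
  set m : ℤ := max 0 (-j) with hm
  have hmn : 0 ≤ m := le_max_left 0 (-j)
  have hyge : 0 ≤ j + m * h := by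
    have : m ≤ m * h := le_mul_of_one_le_right hmn hh
    have : -j ≤ m * h := le_trans (le_max_right 0 (-j)) this
    omega
  have hpre : IsPreproj g h (orbPP g h 0 (j + m * h)) :=
    preproj_xy g h _ _ le_rfl hyge
  have hper : IsPerIn h (orbPer h i j) := ⟨i, j, hij, rfl⟩
  have heq : orbPer h i j = orbPer h (j + m * h - (j - i)) (j + m * h) := by
    rw [orbPer_shift h i j m]
    congr 1 <;> ring
  have hmove : Move g h (.pp (orbPP g h 0 (j + m * h))) (.pe (orbPer h i j)) :=
    ⟨hpre, 0, j + m * h, j - i, by omega, rfl, heq⟩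
  exact (pp_connect g h hpre).tail ⟨hpre, hper, Or.inl hmove⟩

private lemma gamma0_eq (g h : ℤ) (hg : 0 ≤ g) :
    gammaArc g h 0 = orbPI g h (-2) (2 - g) := by
  rw [gammaArc, if_pos hg]
  congr 1
  ring

end AuxConn

/-- the quiver `Γ̄`, whose vertices are the admissible arcs of `P_{g,h}` and
whose arrows are all elementary and long moves, is connected: any two admissible arcs are
joined by a finite sequence of admissible arcs in which consecutive terms are related by a
move in one direction or the other. -/
theorem gammaBar_connected (g h : ℤ) (hh : 1 ≤ h) (hgh : h ≤ g) (α β : AArc)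
    (hα : Admissible g h α) (hβ : Admissible g h β) :
    Relation.ReflTransGen
      (fun u v => Admissible g h u ∧ Admissible g h v ∧ (Move g h u v ∨ Move g h v u))
      α β := by
  have hg : 1 ≤ g := le_trans hh hgh
  have key : ∀ γ : AArc, Admissible g h γ →
      Relation.ReflTransGen (CR g h) (.pp (orbPP g h 0 0)) γ := by
    rintro (A | A | A | A) hγ
    · exact pp_connect g h hγ
    · -- preinjective: hub → po A0 → pi γ0 → pi A (last two reversed)
      have hg0 : IsPreinj g h (gammaArc g h 0) := Relation.ReflTransGen.refl
      have hperA0 : IsPerOut g (orbPer g (-g) (2 - g)) := ⟨-g, 2 - g, by omega, rfl⟩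
      have hmove : Move g h (.po (orbPer g (-g) (2 - g))) (.pi (gammaArc g h 0)) :=
        ⟨-g, 2 - g, -2, by omega, rfl, gamma0_eq g h (by omega), hg0⟩
      have step1 : Relation.ReflTransGen (CR g h) (.pp (orbPP g h 0 0))
          (.pi (gammaArc g h 0)) :=
        (po_connect g h hh hg (-g) (2 - g) (by omega)).tail ⟨hperA0, hg0, Or.inl hmove⟩
      exact step1.trans ((@Relation.ReflTransGen.stdSymm _ (CR g h) ⟨fun _ _ h' => CR_symm g h h'⟩).symm _ _ (pi_connect g h hγ))
    · obtain ⟨i, j, hij, rfl⟩ := hγ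
      exact po_connect g h hh hg i j hij
    · obtain ⟨i, j, hij, rfl⟩ := hγ
      exact pe_connect g h hh i j hij
  exact ((@Relation.ReflTransGen.stdSymm _ (CR g h) ⟨fun _ _ h' => CR_symm g h h'⟩).symm _ _ (key α hα)).trans (key β hβ)
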